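/- Fix n ≥ 0 and let P(x) = Σ_{k=0}^n a_k x^k and Q(x) = Σ_{k=0}^n b_k x^k be real polynomials with a_0 = b_0 = 1 and a_k, b_k ≥ 0 for all k. If P ≥_VAR Q, then P ≥_OCC Q; that is, if V_P(x) ≥ V_Q(x) for all x ≥ 0, then x·P′(x)/P(x) ≥ x·Q′(x)/Q(x) for all x ≥ 0. -/

import Mathlib

open Polynomial

/-- The "variance fraction" functional of a polynomial:
`V_P(x) = (x² P″(x) + x P′(x))/P(x) − x² P′(x)²/P(x)²`. -/
noncomputable def Vp (P : Polynomial ℝ) (x : ℝ) : ℝ :=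
  (x ^ 2 * (Polynomial.derivative (Polynomial.derivative P)).eval x
      + x * (Polynomial.derivative P).eval x) / P.eval x
    - x ^ 2 * ((Polynomial.derivative P).eval x) ^ 2 / (P.eval x) ^ 2

lemma one_le_eval (P : Polynomial ℝ) (hP0 : P.coeff 0 = 1) (hP : ∀ k, 0 ≤ P.coeff k)
    {x : ℝ} (hx : 0 ≤ x) : 1 ≤ P.eval x := by
  rw [Polynomial.eval_eq_sum_range]
  have h := Finset.single_le_sum (f := fun i => P.coeff i * x ^ i)
    (fun i _ => mul_nonneg (hP i) (pow_nonneg hx i))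
    (Finset.mem_range.mpr (Nat.succ_pos P.natDegree))
  simpa [hP0] using h

lemma hasDerivF (P : Polynomial ℝ) {x : ℝ} (hx : P.eval x ≠ 0) :
    HasDerivAt (fun t => t * (Polynomial.derivative P).eval t / P.eval t)
      ((((Polynomial.derivative P).eval x
          + x * (Polynomial.derivative (Polynomial.derivative P)).eval x) * P.eval x
        - x * (Polynomial.derivative P).eval x * (Polynomial.derivative P).eval x)
        / (P.eval x) ^ 2) x := by
  have h1 : HasDerivAt (fun t => t * (Polynomial.derivative P).eval t)
      (1 * (Polynomial.derivative P).eval x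
        + x * (Polynomial.derivative (Polynomial.derivative P)).eval x) x :=
    (hasDerivAt_id x).mul (P.derivative.hasDerivAt x)
  have h2 := P.hasDerivAt x
  have h3 := h1.fun_div h2 hx
  exact h3.congr_deriv (by ring)

lemma key (P : Polynomial ℝ) {t : ℝ} (h : P.eval t ≠ 0) :
    t * deriv (fun s => s * (Polynomial.derivative P).eval s / P.eval s) t = Vp P t := by
  rw [(hasDerivF P h).deriv]
  unfold Vp
  field_simp
  ring

/-- VAR implies OCC for polynomials with constant coefficient 1 and
nonnegative coefficients. -/
theorem stmt4 (n : ℕ) (P Q : Polynomial ℝ)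
    (hPdeg : P.natDegree ≤ n) (hQdeg : Q.natDegree ≤ n)
    (hP0 : P.coeff 0 = 1) (hQ0 : Q.coeff 0 = 1)
    (hP : ∀ k, 0 ≤ P.coeff k) (hQ : ∀ k, 0 ≤ Q.coeff k)
    (hVAR : ∀ x : ℝ, 0 ≤ x → Vp Q x ≤ Vp P x) :
    ∀ x : ℝ, 0 ≤ x →
      x * (Polynomial.derivative Q).eval x / Q.eval x
        ≤ x * (Polynomial.derivative P).eval x / P.eval x := by
  intro x hx
  have hPpos : ∀ t : ℝ, 0 ≤ t → 0 < P.eval t := fun t ht =>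
    lt_of_lt_of_le one_pos (one_le_eval P hP0 hP ht)
  have hQpos : ∀ t : ℝ, 0 ≤ t → 0 < Q.eval t := fun t ht =>
    lt_of_lt_of_le one_pos (one_le_eval Q hQ0 hQ ht)
  set F : ℝ → ℝ := fun t => t * (Polynomial.derivative P).eval t / P.eval t with hF
  set G : ℝ → ℝ := fun t => t * (Polynomial.derivative Q).eval t / Q.eval t with hG
  have hmono : MonotoneOn (fun t => F t - G t) (Set.Icc 0 x) := by
    apply monotoneOn_of_deriv_nonneg (convex_Icc 0 x)
    · apply ContinuousOn.sub
      · exact ContinuousOn.div (by fun_prop) (by fun_prop)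
          fun t ht => (hPpos t ht.1).ne'
      · exact ContinuousOn.div (by fun_prop) (by fun_prop)
          fun t ht => (hQpos t ht.1).ne'
    · rw [interior_Icc]
      intro t ht
      exact DifferentiableAt.differentiableWithinAt
        (((hasDerivF P (hPpos t ht.1.le).ne').differentiableAt).sub
          ((hasDerivF Q (hQpos t ht.1.le).ne').differentiableAt))
    · rw [interior_Icc]
      intro t ht
      have htpos : 0 < t := ht.1
      have hPne := (hPpos t htpos.le).ne'
      have hQne := (hQpos t htpos.le).ne'
      have hdF := (hasDerivF P hPne).differentiableAt
      have hdG := (hasDerivF Q hQne).differentiableAt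
      rw [deriv_fun_sub hdF hdG]
      have hv := hVAR t htpos.le
      rw [← key P hPne, ← key Q hQne] at hv
      exact sub_nonneg.mpr (le_of_mul_le_mul_left hv htpos)
  have h0 : F 0 - G 0 = 0 := by simp [hF, hG]
  have h1 : F 0 - G 0 ≤ F x - G x :=
    hmono (Set.left_mem_Icc.mpr hx) (Set.right_mem_Icc.mpr hx) hx
  rw [h0] at h1
  show G x ≤ F x
  linarith
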